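/- For σ ∈ (1,2) and c > 0, with A_σ = ∫_ℝ(x²+1)^{-1/σ}dx, B_σ = ∫_ℝ(x²+1)^{-1/σ-1}dx, M(c) = (1/2)σ^{-1}(2σ+2)^{1/σ} A_σ c^{1/σ-1}, and P(c) = -(c/2)M(c) + (1/2)σ^{-1}(2σ+2)^{1/σ} B_σ c^{1/σ}, the quantity -(c/2)M'(c) - P'(c) equals (1/4)σ^{-2}(2σ+2)^{1/σ}·2(σ-1)·A_σ·c^{1/σ-1}, which is strictly positive. -/

import Mathlib

open MeasureTheory Filter Real Topology

lemma integ_aux (p : ℝ) (hp : 1/2 < p) : Integrable fun x : ℝ => (x^2+1)^(-p) := by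
  have h := integrable_rpow_neg_one_add_norm_sq (E := ℝ) (μ := volume)
    (r := 2*p) (by simp [Module.finrank_self]; linarith)
  refine h.congr (Filter.Eventually.of_forall fun x => ?_)
  simp only [Real.norm_eq_abs, sq_abs, add_comm (1:ℝ)]
  congr 1
  ring

lemma key_identity (p : ℝ) (hp : 1/2 < p) (hp1 : p < 1) :
    (∫ x : ℝ, (x^2+1)^(-p-1)) = (2*p-1)/(2*p) * ∫ x : ℝ, (x^2+1)^(-p) := by
  have hA : Integrable fun x : ℝ => (x^2+1)^(-p) := integ_aux p hp
  have hB : Integrable fun x : ℝ => (x^2+1)^(-p-1) := by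
    have := integ_aux (p+1) (by linarith)
    simpa [show -(p+1) = -p-1 by ring] using this
  set g : ℝ → ℝ := fun x => x * (x^2+1)^(-p) with hg
  set g' : ℝ → ℝ := fun x => (1-2*p)*(x^2+1)^(-p) + (2*p)*(x^2+1)^(-p-1) with hg'
  have hderiv : ∀ x, HasDerivAt g (g' x) x := by
    intro x
    have hx : (0:ℝ) < x^2+1 := by positivity
    have h1 : HasDerivAt (fun x : ℝ => x^2+1) (2*x) x := by
      simpa using (hasDerivAt_pow 2 x).add_const 1
    have h2 : HasDerivAt (fun x : ℝ => (x^2+1)^(-p)) (2*x * (-p) * (x^2+1)^(-p-1)) x :=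
      h1.rpow_const (Or.inl hx.ne')
    have h3 : HasDerivAt (fun y : ℝ => id y * (y^2+1)^(-p)) _ x := (hasDerivAt_id x).mul h2
    have hkey : (x^2+1)^(-p-1) * (x^2+1) = (x^2+1)^(-p) := by
      rw [← Real.rpow_add_one hx.ne' (-p-1)]
      norm_num
    convert h3 using 1
    · rfl
    simp only [hg', id_eq]
    linear_combination (2*p) * hkey
  have hint : Integrable g' := (hA.const_mul _).add (hB.const_mul _)
  have htop : Tendsto g atTop (𝓝 0) := by
    apply squeeze_zero' (g := fun x : ℝ => x^(1-2*p))
    · filter_upwards [eventually_ge_atTop (1:ℝ)] with x hx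
      have : (0:ℝ) < x^2+1 := by positivity
      positivity
    · filter_upwards [eventually_ge_atTop (1:ℝ)] with x hx
      have hx0 : (0:ℝ) < x := by linarith
      have h1 : (x^2+1)^(-p) ≤ (x^2)^(-p) := by
        apply Real.rpow_le_rpow_of_nonpos (by positivity) (by linarith) (by linarith)
      have h2 : (x^2:ℝ)^(-p) = x^(-(2*p)) := by
        rw [← Real.rpow_natCast x 2, ← Real.rpow_mul hx0.le]
        norm_num
      calc g x = x * (x^2+1)^(-p) := rfl
        _ ≤ x * (x^2)^(-p) := by nlinarith [Real.rpow_nonneg (by positivity : (0:ℝ) ≤ x^2+1) (-p)]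
        _ = x^(1:ℝ) * x^(-(2*p)) := by rw [h2, Real.rpow_one]
        _ = x^(1-2*p) := by rw [← Real.rpow_add hx0]; ring_nf
    · have := tendsto_rpow_neg_atTop (y := 2*p-1) (by linarith)
      simpa [show -(2*p-1) = 1-2*p by ring] using this
  have hbot : Tendsto g atBot (𝓝 0) := by
    have hodd : ∀ x, g (-x) = - g x := by
      intro x; simp only [hg, neg_sq]; ring
    have h1 : Tendsto (fun x => g (-x)) atTop (𝓝 0) := by
      simpa [hodd] using htop.neg
    have h2 := h1.comp tendsto_neg_atBot_atTop
    exact h2.congr (fun x => by simp [Function.comp])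
  have hzero : ∫ x, g' x = 0 := by
    rw [MeasureTheory.integral_of_hasDerivAt_of_tendsto hderiv hint hbot htop]
    simp
  rw [integral_add (hA.const_mul _) (hB.const_mul _), integral_const_mul, integral_const_mul]
    at hzero
  have h2p : (2*p) ≠ 0 := by positivity
  field_simp
  linarith [hzero]


noncomputable def Aσ (σ : ℝ) : ℝ := ∫ x : ℝ, (x^2 + 1) ^ (-(1/σ))
noncomputable def Bσ (σ : ℝ) : ℝ := ∫ x : ℝ, (x^2 + 1) ^ (-(1/σ) - 1)

noncomputable def Mass (σ c : ℝ) : ℝ := (1/2) * σ⁻¹ * (2*σ+2) ^ (1/σ) * Aσ σ * c ^ (1/σ - 1)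

noncomputable def Mom (σ c : ℝ) : ℝ :=
  -(c/2) * Mass σ c + (1/2) * σ⁻¹ * (2*σ+2) ^ (1/σ) * Bσ σ * c ^ (1/σ)

theorem stmt8 (σ c : ℝ) (hσ : σ ∈ Set.Ioo (1:ℝ) 2) (hc : 0 < c) :
    (-(c/2) * deriv (Mass σ) c - deriv (Mom σ) c
        = (1/4) * (σ^2)⁻¹ * (2*σ+2) ^ (1/σ) * (2*(σ-1)) * Aσ σ * c ^ (1/σ - 1))
      ∧ 0 < -(c/2) * deriv (Mass σ) c - deriv (Mom σ) c := by
  obtain ⟨hσ1, hσ2⟩ := hσ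
  have hσ0 : (0:ℝ) < σ := by linarith
  have h12 : (1:ℝ)/2 < 1/σ := by
    rw [div_lt_div_iff₀ (by norm_num) hσ0]; linarith
  have hBA : Bσ σ = (2*(1/σ)-1)/(2*(1/σ)) * Aσ σ := by
    have h := key_identity (1/σ) h12 ((div_lt_one hσ0).mpr hσ1)
    simpa [Aσ, Bσ, neg_div, sub_eq_add_neg, neg_add] using h
  have hApos : 0 < Aσ σ := by
    rw [Aσ, integral_pos_iff_support_of_nonneg]
    · have : Function.support (fun x : ℝ => (x^2+1)^(-(1/σ))) = Set.univ := by
        ext x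
        have : (0:ℝ) < x^2+1 := by positivity
        simp only [Function.mem_support, Set.mem_univ, iff_true]
        exact ne_of_gt (Real.rpow_pos_of_pos this _)
      rw [this]; simp
    · intro x
      have : (0:ℝ) < x^2+1 := by positivity
      positivity
    · exact integ_aux (1/σ) h12
  have hMass : HasDerivAt (Mass σ)
      ((1/2) * σ⁻¹ * (2*σ+2) ^ (1/σ) * Aσ σ * ((1/σ-1) * c^(1/σ-1-1))) c := by
    have h := (Real.hasDerivAt_rpow_const (p := 1/σ-1) (Or.inl hc.ne')).const_mul
      ((1/2) * σ⁻¹ * (2*σ+2) ^ (1/σ) * Aσ σ)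
    exact h
  have hhalf : HasDerivAt (fun c : ℝ => -(c/2)) (-(1/2)) c := by
    simpa [Pi.neg_def] using ((hasDerivAt_id c).div_const 2).neg
  have hMomB := (Real.hasDerivAt_rpow_const (p := 1/σ) (Or.inl hc.ne')).const_mul
      ((1/2) * σ⁻¹ * (2*σ+2) ^ (1/σ) * Bσ σ)
  have hMom : HasDerivAt (Mom σ)
      ((-(1/2)) * Mass σ c + (-(c/2)) * ((1/2) * σ⁻¹ * (2*σ+2) ^ (1/σ) * Aσ σ * ((1/σ-1) * c^(1/σ-1-1)))
        + (1/2) * σ⁻¹ * (2*σ+2) ^ (1/σ) * Bσ σ * ((1/σ) * c^(1/σ-1))) c :=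
    (hhalf.mul hMass).add hMomB
  have hdM := hMass.deriv
  have hdP := hMom.deriv
  have heq : -(c/2) * deriv (Mass σ) c - deriv (Mom σ) c
      = (1/4) * (σ^2)⁻¹ * (2*σ+2) ^ (1/σ) * (2*(σ-1)) * Aσ σ * c ^ (1/σ - 1) := by
    rw [hdM, hdP, hBA]
    simp only [Mass, hBA]
    field_simp
    ring
  refine ⟨heq, ?_⟩
  rw [heq]
  have h1 : (0:ℝ) < (2*σ+2) ^ (1/σ) := Real.rpow_pos_of_pos (by linarith) _
  have h2 : (0:ℝ) < c ^ (1/σ - 1) := Real.rpow_pos_of_pos hc _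
  have h3 : (0:ℝ) < σ - 1 := by linarith
  positivity
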